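/- Let v ∈ S¹, c > 0, and γ : I → ℝ² a C¹ curve with ⟨γ'(t),v⟩ ≥ c for all t ∈ I. Let (Σ_p)_{p≥0} be a filtration of sub-σ-algebras of the Borel σ-algebra on I, β_p := E[γ' | Σ_p] the conditional expectation of γ' given Σ_p with respect to Lebesgue measure on I, and X_p(t) := ⟨β_p(t),v^⊥⟩ / ⟨β_p(t),v⟩. Then for every λ > 0, the Lebesgue measure of the set {t ∈ I : sup_{p≥1} |∑_{q=0}^{2p−1} (−1)^q X_q(t)| > λ} is at most 16·ℒ(I)/(λ² c³), where ℒ(I) is the length of I. -/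

import Mathlib

open MeasureTheory Filter Metric Set Topology RealInnerProductSpace ENNReal NNReal

noncomputable section

/-- The Euclidean plane. -/
abbrev E2 := EuclideanSpace ℝ (Fin 2)

/-- Rotation of a planar vector by `π/2`. -/
def perp (v : E2) : E2 := (WithLp.equiv 2 (Fin 2 → ℝ)).symm ![-(v 1), v 0]

/-- `IsC1Curve a b γ γ'` : `γ` restricted to the compact nondegenerate interval `[a,b]`
is a C¹ curve with (one-sided at endpoints) derivative `γ'`, continuous and of unit
norm on `[a,b]`. -/
def IsC1Curve (a b : ℝ) (γ γ' : ℝ → E2) : Prop :=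
  a < b ∧ ContinuousOn γ' (Set.Icc a b) ∧
    (∀ t ∈ Set.Icc a b, HasDerivWithinAt γ (γ' t) (Set.Icc a b) t) ∧
    (∀ t ∈ Set.Icc a b, ‖γ' t‖ = 1)

private lemma integrable_of_bdd {Ω : Type*} {m0 : MeasurableSpace Ω} {μ' : Measure Ω}
    [IsFiniteMeasure μ'] {f : Ω → ℝ} {C : ℝ} (hm : AEStronglyMeasurable f μ')
    (hb : ∀ᵐ t ∂μ', |f t| ≤ C) : Integrable f μ' :=
  Integrable.mono' (integrable_const C) hm (by simpa [Real.norm_eq_abs] using hb)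

theorem aux_main {Ω : Type*} {m0 : MeasurableSpace Ω} (μ : Measure Ω) [IsFiniteMeasure μ]
    (ℱ : Filtration ℕ m0) (c : ℝ) (hc : 0 < c) (hc1 : c ≤ 1)
    (u w : Ω → ℝ) (hu_int : Integrable u μ) (hw_int : Integrable w μ)
    (huc : ∀ᵐ t ∂μ, c ≤ u t) (hu1 : ∀ᵐ t ∂μ, u t ≤ 1) (hw1 : ∀ᵐ t ∂μ, |w t| ≤ 1)
    (U W : ℕ → Ω → ℝ)
    (hUsm : ∀ q, StronglyMeasurable[ℱ q] (U q)) (hWsm : ∀ q, StronglyMeasurable[ℱ q] (W q))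
    (hUce : ∀ q, U q =ᵐ[μ] μ[u|ℱ q]) (hWce : ∀ q, W q =ᵐ[μ] μ[w|ℱ q])
    (lam : ℝ) (hlam : 0 < lam) :
    μ {t | ∃ p : ℕ, 1 ≤ p ∧ lam < |∑ q ∈ Finset.range (2*p), (-1:ℝ)^q * (W q t / U q t)|}
      ≤ ENNReal.ofReal ((μ Set.univ).toReal / (lam^2 * c^3)) := by
  ------------------------------------------------------------------
  -- the density and the new measure ν
  ------------------------------------------------------------------
  obtain ⟨u', hu'sm, hu'ae⟩ : ∃ u', StronglyMeasurable u' ∧ u =ᵐ[μ] u' :=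
    ⟨hu_int.1.mk u, hu_int.1.stronglyMeasurable_mk, hu_int.1.ae_eq_mk⟩
  set ρ : Ω → ℝ≥0 := fun t => Real.toNNReal (max c (min 1 (u' t))) with hρ
  have hρmeas : Measurable ρ :=
    (measurable_const.max (measurable_const.min hu'sm.measurable)).real_toNNReal
  have hρc : ∀ t, c ≤ (ρ t : ℝ) := by
    intro t
    rw [hρ, Real.coe_toNNReal _ (le_trans hc.le (le_max_left _ _))]
    exact le_max_left _ _
  have hρ1 : ∀ t, (ρ t : ℝ) ≤ 1 := by
    intro t
    rw [hρ, Real.coe_toNNReal _ (le_trans hc.le (le_max_left _ _))]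
    exact max_le hc1 (min_le_left _ _)
  have hρu : (fun t => (ρ t : ℝ)) =ᵐ[μ] u := by
    filter_upwards [huc, hu1, hu'ae] with t h1 h2 h3
    rw [hρ, Real.coe_toNNReal _ (le_trans hc.le (le_max_left _ _)), ← h3,
      min_eq_right h2, max_eq_right h1]
  set ν : Measure Ω := μ.withDensity (fun t => (ρ t : ℝ≥0∞)) with hνd
  have hν_le : ∀ S : Set Ω, MeasurableSet S → ν S ≤ μ S := by
    intro S hS
    rw [hνd, withDensity_apply _ hS]
    calc ∫⁻ t in S, (ρ t : ℝ≥0∞) ∂μ ≤ ∫⁻ _ in S, 1 ∂μ := by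
          refine lintegral_mono fun t => ?_
          simpa using ENNReal.coe_le_one_iff.2 (by exact_mod_cast hρ1 t)
      _ = μ S := by simp
  have hν_ge : ∀ S : Set Ω, MeasurableSet S → ENNReal.ofReal c * μ S ≤ ν S := by
    intro S hS
    rw [hνd, withDensity_apply _ hS]
    calc ENNReal.ofReal c * μ S = ∫⁻ _ in S, ENNReal.ofReal c ∂μ := by simp [mul_comm]
      _ ≤ ∫⁻ t in S, (ρ t : ℝ≥0∞) ∂μ := by
          refine lintegral_mono fun t => ?_
          rw [← ENNReal.ofReal_coe_nnreal]
          exact ENNReal.ofReal_le_ofReal (hρc t)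
  haveI hνfin : IsFiniteMeasure ν :=
    ⟨lt_of_le_of_lt (hν_le univ MeasurableSet.univ) (measure_lt_top μ univ)⟩
  have hν_ac : ν ≪ μ := withDensity_absolutelyContinuous _ _
  ------------------------------------------------------------------
  -- basic a.e. bounds
  ------------------------------------------------------------------
  have hUc : ∀ q, ∀ᵐ t ∂μ, c ≤ U q t := by
    intro q
    have h2 := condExp_mono (m := ℱ q) (integrable_const c) hu_int (huc : _ ≤ᵐ[μ] _)
    rw [condExp_const (ℱ.le q)] at h2
    filter_upwards [h2, hUce q] with t h2 h3
    rw [h3]; exact h2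
  have hWb : ∀ q, ∀ᵐ t ∂μ, |W q t| ≤ 1 := by
    intro q
    have h1 : (fun _ : Ω => (-1:ℝ)) ≤ᵐ[μ] w := by
      filter_upwards [hw1] with t ht using (abs_le.1 ht).1
    have h1' : w ≤ᵐ[μ] (fun _ : Ω => (1:ℝ)) := by
      filter_upwards [hw1] with t ht using (abs_le.1 ht).2
    have h2 := condExp_mono (m := ℱ q) (integrable_const (-1)) hw_int h1
    have h2' := condExp_mono (m := ℱ q) hw_int (integrable_const 1) h1'
    rw [condExp_const (ℱ.le q)] at h2 h2'
    filter_upwards [h2, h2', hWce q] with t h2 h2' h3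
    rw [h3]; exact abs_le.2 ⟨h2, h2'⟩
  -- the ratio process
  set X : ℕ → Ω → ℝ := fun q t => W q t / U q t with hX
  have hXsmF : ∀ q, StronglyMeasurable[ℱ q] (X q) := fun q =>
    ((hWsm q).measurable.div (hUsm q).measurable).stronglyMeasurable
  have hXsm0 : ∀ q, StronglyMeasurable (X q) := fun q => (hXsmF q).mono (ℱ.le q)
  have hXb : ∀ q, ∀ᵐ t ∂μ, |X q t| ≤ 1/c := by
    intro q
    filter_upwards [hUc q, hWb q] with t h1 h2
    rw [hX]; simp only
    rw [abs_div, abs_of_pos (lt_of_lt_of_le hc h1)]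
    exact div_le_div₀ zero_le_one h2 hc h1
  have hXbν : ∀ q, ∀ᵐ t ∂ν, |X q t| ≤ 1/c := fun q => (hν_ac.ae_le (hXb q) : _)
  have hXint : ∀ q, Integrable (X q) ν :=
    fun q => integrable_of_bdd (hXsm0 q).aestronglyMeasurable (hXbν q)
  ------------------------------------------------------------------
  -- Lemma A : key change-of-measure identity
  ------------------------------------------------------------------
  have lemA : ∀ q r : ℕ, q ≤ r → ∀ (g : Ω → ℝ) (C : ℝ), 0 ≤ C → StronglyMeasurable[ℱ q] g →
      (∀ᵐ t ∂μ, |g t| ≤ C) → ∫ t, g t * X r t ∂ν = ∫ t, g t * w t ∂μ := by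
    intro q r hqr g C hC hgsm hgb
    have hgsm' : StronglyMeasurable[ℱ r] g := hgsm.mono (ℱ.mono hqr)
    set φ : Ω → ℝ := fun t => g t * X r t with hφ
    have hφsm : StronglyMeasurable[ℱ r] φ := hgsm'.mul (hXsmF r)
    have hφm0 : AEStronglyMeasurable φ μ := ((hφsm.mono (ℱ.le r))).aestronglyMeasurable
    have hφb : ∀ᵐ t ∂μ, |φ t| ≤ C/c := by
      filter_upwards [hgb, hXb r] with t h1 h2
      rw [hφ]; simp only [abs_mul]
      calc |g t| * |X r t| ≤ C * (1/c) := mul_le_mul h1 h2 (abs_nonneg _) hC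
        _ = C/c := by ring
    have hφu_int : Integrable (φ * u) μ := by
      refine integrable_of_bdd (hφm0.mul hu_int.1) (C := C/c * 1) ?_
      filter_upwards [hφb, huc, hu1] with t h1 h2 h3
      rw [Pi.mul_apply, abs_mul]
      exact mul_le_mul h1 (abs_le.2 ⟨by linarith, h3⟩) (abs_nonneg _) (by positivity)
    have hgw_int : Integrable (g * w) μ := by
      refine integrable_of_bdd ((hgsm'.mono (ℱ.le r)).aestronglyMeasurable.mul hw_int.1)
        (C := C * 1) ?_
      filter_upwards [hgb, hw1] with t h1 h2
      rw [Pi.mul_apply, abs_mul]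
      exact mul_le_mul h1 h2 (abs_nonneg _) hC
    calc ∫ t, g t * X r t ∂ν = ∫ t, ρ t • (g t * X r t) ∂μ := by
          rw [hνd]; exact integral_withDensity_eq_integral_smul hρmeas _
      _ = ∫ t, (φ * u) t ∂μ := by
          refine integral_congr_ae ?_
          filter_upwards [hρu] with t ht
          rw [NNReal.smul_def, smul_eq_mul, ht, Pi.mul_apply, hφ]
          ring
      _ = ∫ t, (μ[φ * u|ℱ r]) t ∂μ := (integral_condExp (ℱ.le r)).symm
      _ = ∫ t, (φ * μ[u|ℱ r]) t ∂μ :=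
          integral_congr_ae (condExp_mul_of_stronglyMeasurable_left hφsm hφu_int hu_int)
      _ = ∫ t, g t * W r t ∂μ := by
          refine integral_congr_ae ?_
          filter_upwards [(hUce r).symm, hUc r] with t h1 h2
          rw [Pi.mul_apply, h1]
          show (g t * (W r t / U r t)) * U r t = g t * W r t
          rw [mul_assoc, div_mul_cancel₀ _ (ne_of_gt (lt_of_lt_of_le hc h2))]
      _ = ∫ t, (g * μ[w|ℱ r]) t ∂μ := by
          refine integral_congr_ae ?_
          filter_upwards [hWce r] with t ht
          rw [Pi.mul_apply, ht]
      _ = ∫ t, (μ[g * w|ℱ r]) t ∂μ :=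
          (integral_congr_ae (condExp_mul_of_stronglyMeasurable_left hgsm' hgw_int hw_int)).symm
      _ = ∫ t, (g * w) t ∂μ := integral_condExp (ℱ.le r)
      _ = ∫ t, g t * w t ∂μ := rfl
  ------------------------------------------------------------------
  -- Lemma A, set-integral version
  ------------------------------------------------------------------
  have lemAset : ∀ q r : ℕ, q ≤ r → ∀ A : Set Ω, MeasurableSet[ℱ q] A →
      ∫ t in A, X r t ∂ν = ∫ t in A, w t ∂μ := by
    intro q r hqr A hA
    have hg : StronglyMeasurable[ℱ q] (A.indicator (fun _ => (1:ℝ))) :=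
      stronglyMeasurable_const.indicator hA
    have hb : ∀ᵐ t ∂μ, |A.indicator (fun _ => (1:ℝ)) t| ≤ 1 := by
      refine ae_of_all _ fun t => ?_
      by_cases h : t ∈ A <;> simp [Set.indicator_apply, h]
    have h := lemA q r hqr _ 1 zero_le_one hg hb
    have e1 : ∀ f : Ω → ℝ, (fun t => A.indicator (fun _ => (1:ℝ)) t * f t) = A.indicator f := by
      intro f; funext t
      by_cases h : t ∈ A <;> simp [Set.indicator_apply, h]
    rw [e1, e1] at h
    rwa [integral_indicator ((ℱ.le q) A hA), integral_indicator ((ℱ.le q) A hA)] at h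
  ------------------------------------------------------------------
  -- the alternating-sum process M and the paired filtration G
  ------------------------------------------------------------------
  set M : ℕ → Ω → ℝ := fun p t => ∑ q ∈ Finset.range (2*p), (-1:ℝ)^q * X q t with hM
  have hMsm : ∀ p, StronglyMeasurable[ℱ (2*p)] (M p) := by
    intro p
    refine Finset.stronglyMeasurable_fun_sum _ fun q hq => ?_
    exact stronglyMeasurable_const.mul
      ((hXsmF q).mono (ℱ.mono (le_of_lt (Finset.mem_range.1 hq))))
  have hMsm0 : ∀ p, StronglyMeasurable (M p) := fun p => (hMsm p).mono (ℱ.le _)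
  have hMb : ∀ p, ∀ᵐ t ∂μ, |M p t| ≤ (2*p)/c := by
    intro p
    filter_upwards [ae_all_iff.2 hXb] with t ht
    calc |M p t| ≤ ∑ q ∈ Finset.range (2*p), |(-1:ℝ)^q * X q t| :=
          Finset.abs_sum_le_sum_abs _ _
      _ ≤ ∑ _q ∈ Finset.range (2*p), 1/c := by
          refine Finset.sum_le_sum fun q _ => ?_
          rw [abs_mul, abs_pow, abs_neg, abs_one, one_pow, one_mul]
          exact ht q
      _ = (2*p)/c := by
          rw [Finset.sum_const, Finset.card_range, nsmul_eq_mul]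
          push_cast; ring
  have hMbν : ∀ p, ∀ᵐ t ∂ν, |M p t| ≤ (2*p)/c := fun p => (hν_ac.ae_le (hMb p) : _)
  have hMint : ∀ p, Integrable (M p) ν :=
    fun p => integrable_of_bdd (hMsm0 p).aestronglyMeasurable (hMbν p)
  have hprod_int : ∀ f g : Ω → ℝ, StronglyMeasurable f → StronglyMeasurable g →
      ∀ Cf Cg : ℝ, 0 ≤ Cf → (∀ᵐ t ∂ν, |f t| ≤ Cf) → (∀ᵐ t ∂ν, |g t| ≤ Cg) →
      Integrable (fun t => f t * g t) ν := by
    intro f g hf hg Cf Cg hCf hbf hbg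
    refine integrable_of_bdd ((hf.mul hg).aestronglyMeasurable) (C := Cf * Cg) ?_
    filter_upwards [hbf, hbg] with t h1 h2
    rw [abs_mul]
    exact mul_le_mul h1 h2 (abs_nonneg _) hCf
  have hMMint : ∀ i j, Integrable (fun t => M i t * M j t) ν := fun i j =>
    hprod_int _ _ (hMsm0 i) (hMsm0 j) _ _ (by positivity) (hMbν i) (hMbν j)
  set G : Filtration ℕ m0 :=
    ⟨fun p => ℱ (2*p), fun i j hij => ℱ.mono (by omega), fun p => ℱ.le _⟩ with hG
  have hGle : ∀ i j, i ≤ j → (G i : MeasurableSpace Ω) ≤ ℱ (2*j) := fun i j hij =>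
    ℱ.mono (by omega)
  -- one-step description of M
  have hMsucc : ∀ k t, M (k+1) t = M k t + (X (2*k) t - X (2*k+1) t) := by
    intro k t
    have h2k : 2*(k+1) = (2*k)+1+1 := by ring
    rw [hM]; simp only
    rw [h2k, Finset.sum_range_succ, Finset.sum_range_succ]
    have h1 : (-1:ℝ)^(2*k) = 1 := by rw [pow_mul]; norm_num
    have h2 : (-1:ℝ)^(2*k+1) = -1 := by rw [pow_succ, h1, one_mul]
    rw [h1, h2]; ring
  ------------------------------------------------------------------
  -- M is a ν-martingale w.r.t. G
  ------------------------------------------------------------------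
  have hMset : ∀ i j, i ≤ j → ∀ A : Set Ω, MeasurableSet[ℱ (2*i)] A →
      ∫ t in A, M j t ∂ν = ∫ t in A, M i t ∂ν := by
    intro i j hij A hA
    induction j, hij using Nat.le_induction with
    | base => rfl
    | succ j hij ih =>
      calc ∫ t in A, M (j+1) t ∂ν
          = ∫ t in A, (M j t + (X (2*j) t - X (2*j+1) t)) ∂ν := by
            refine integral_congr_ae (ae_of_all _ fun t => ?_)
            exact hMsucc j t
        _ = (∫ t in A, M j t ∂ν) + ∫ t in A, (X (2*j) t - X (2*j+1) t) ∂ν :=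
            integral_add ((hMint j).integrableOn)
              (((hXint (2*j)).integrableOn).sub ((hXint (2*j+1)).integrableOn))
        _ = ∫ t in A, M j t ∂ν + ((∫ t in A, X (2*j) t ∂ν) - ∫ t in A, X (2*j+1) t ∂ν) :=
            congrArg (fun z => (∫ t in A, M j t ∂ν) + z)
              (integral_sub ((hXint (2*j)).integrableOn) ((hXint (2*j+1)).integrableOn))
        _ = ∫ t in A, M j t ∂ν := by
            rw [lemAset (2*i) (2*j) (by omega) A hA, lemAset (2*i) (2*j+1) (by omega) A hA]
            ring
        _ = ∫ t in A, M i t ∂ν := ih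
  have hMart : ∀ i j, i ≤ j → ν[M j|G i] =ᵐ[ν] M i := by
    intro i j hij
    refine (ae_eq_condExp_of_forall_setIntegral_eq (G.le i) (hMint j)
      (fun s _ _ => (hMint i).integrableOn)
      (fun s hs _ => (hMset i j hij s hs).symm)
      ((hMsm i).aestronglyMeasurable)).symm
  ------------------------------------------------------------------
  -- (M p)² is a ν-submartingale w.r.t. G
  ------------------------------------------------------------------
  have hsub : Submartingale (fun p t => M p t * M p t) G ν := by
    refine ⟨fun p => (hMsm p).mul (hMsm p), fun i j hij => ?_, fun i => hMMint i i⟩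
    have key1 : ν[(fun t => M i t * M j t)|G i] =ᵐ[ν] fun t => M i t * M i t := by
      have h := condExp_mul_of_stronglyMeasurable_left (μ := ν) (m := (G i : MeasurableSpace Ω))
        (hMsm i) (hMMint i j) (hMint j)
      refine h.trans ?_
      filter_upwards [hMart i j hij] with t ht
      simp only [Pi.mul_apply]
      rw [ht]
    have key2 : ν[(fun t => M i t * M i t)|G i] = fun t => M i t * M i t :=
      condExp_of_stronglyMeasurable (G.le i) ((hMsm i).mul (hMsm i)) (hMMint i i)
    have hR_int : Integrable (fun t => (M j t - M i t) * (M j t - M i t)) ν := by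
      refine hprod_int _ _ ((hMsm0 j).sub (hMsm0 i)) ((hMsm0 j).sub (hMsm0 i))
        (2*j/c + 2*i/c) (2*j/c + 2*i/c) (by positivity) ?_ ?_ <;>
      · filter_upwards [hMbν i, hMbν j] with t h1 h2
        calc |M j t - M i t| ≤ |M j t| + |M i t| := abs_sub _ _
          _ ≤ 2*j/c + 2*i/c := add_le_add h2 h1
    have hdecomp : (fun t => M j t * M j t)
        = (2:ℝ) • (fun t => M i t * M j t)
          + ((fun t => (M j t - M i t) * (M j t - M i t)) - fun t => M i t * M i t) := by
      funext t
      simp only [Pi.add_apply, Pi.sub_apply, Pi.smul_apply, smul_eq_mul]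
      ring
    have e1 : ν[(fun t => M j t * M j t)|G i]
        =ᵐ[ν] ν[(2:ℝ) • (fun t => M i t * M j t)|G i]
          + ν[((fun t => (M j t - M i t) * (M j t - M i t)) - fun t => M i t * M i t)|G i] := by
      rw [hdecomp]
      exact condExp_add ((hMMint i j).smul (2:ℝ)) (hR_int.sub (hMMint i i)) _
    have e2 : ν[(2:ℝ) • (fun t => M i t * M j t)|G i]
        =ᵐ[ν] (2:ℝ) • ν[(fun t => M i t * M j t)|G i] := condExp_smul _ _ _
    have e3 : ν[((fun t => (M j t - M i t) * (M j t - M i t)) - fun t => M i t * M i t)|G i]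
        =ᵐ[ν] ν[(fun t => (M j t - M i t) * (M j t - M i t))|G i]
          - ν[(fun t => M i t * M i t)|G i] := condExp_sub hR_int (hMMint i i) _
    have e4 : 0 ≤ᵐ[ν] ν[(fun t => (M j t - M i t) * (M j t - M i t))|G i] :=
      condExp_nonneg (ae_of_all _ fun t => mul_self_nonneg _)
    filter_upwards [e1, e2, e3, e4, key1] with t h1 h2 h3 h4 k1
    have hk2 : (ν[(fun t => M i t * M i t)|G i]) t = M i t * M i t := by rw [key2]
    show M i t * M i t ≤ (ν[fun t => M j t * M j t|G i]) t
    simp only [Pi.add_apply, Pi.sub_apply, Pi.smul_apply, smul_eq_mul, Pi.zero_apply] at h1 h2 h3 h4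
    rw [h1, h2, h3, k1, hk2]
    linarith
  ------------------------------------------------------------------
  -- uniform L² bound on M
  ------------------------------------------------------------------
  have hXXint : ∀ q r, Integrable (fun t => X q t * X r t) ν := fun q r =>
    hprod_int _ _ (hXsm0 q) (hXsm0 r) _ _ (by positivity) (hXbν q) (hXbν r)
  have hJb : ∀ q, ∫ t, X q t * X q t ∂ν ≤ (μ univ).toReal * (1/c^2) := by
    intro q
    have h1 : ∫ t, X q t * X q t ∂ν ≤ ∫ _t, (1/c^2 : ℝ) ∂ν := by
      refine integral_mono_ae (hXXint q q) (integrable_const _) ?_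
      filter_upwards [hXbν q] with t ht
      calc X q t * X q t = |X q t| * |X q t| := (abs_mul_abs_self _).symm
        _ ≤ (1/c) * (1/c) := mul_le_mul ht ht (abs_nonneg _) (by positivity)
        _ = 1/c^2 := by ring
    rw [integral_const, smul_eq_mul] at h1
    refine h1.trans ?_
    have h2 : (ν univ).toReal ≤ (μ univ).toReal :=
      ENNReal.toReal_mono (measure_ne_top μ _) (hν_le univ MeasurableSet.univ)
    exact mul_le_mul_of_nonneg_right h2 (by positivity)
  have horth : ∀ q r, q ≤ r → ∫ t, X q t * X r t ∂ν = ∫ t, X q t * X q t ∂ν := by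
    intro q r hqr
    rw [lemA q r hqr (X q) (1/c) (by positivity) (hXsmF q) (hXb q),
        lemA q q le_rfl (X q) (1/c) (by positivity) (hXsmF q) (hXb q)]
  have hDD : ∀ q, ∫ t, (X (q+1) t - X q t) * (X (q+1) t - X q t) ∂ν
      = ∫ t, X (q+1) t * X (q+1) t ∂ν - ∫ t, X q t * X q t ∂ν := by
    intro q
    have e : (fun t => (X (q+1) t - X q t) * (X (q+1) t - X q t))
        = fun t => X (q+1) t * X (q+1) t - (2 * (X q t * X (q+1) t) - X q t * X q t) := by
      funext t; ring
    have i1 : Integrable (fun t => 2 * (X q t * X (q+1) t) - X q t * X q t) ν :=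
      ((hXXint q (q+1)).const_mul 2).sub (hXXint q q)
    have s1 : ∫ t, (X (q+1) t * X (q+1) t - (2 * (X q t * X (q+1) t) - X q t * X q t)) ∂ν
        = (∫ t, X (q+1) t * X (q+1) t ∂ν)
          - ∫ t, (2 * (X q t * X (q+1) t) - X q t * X q t) ∂ν :=
      integral_sub (hXXint (q+1) (q+1)) i1
    have s2 : ∫ t, (2 * (X q t * X (q+1) t) - X q t * X q t) ∂ν
        = (∫ t, 2 * (X q t * X (q+1) t) ∂ν) - ∫ t, X q t * X q t ∂ν :=
      integral_sub ((hXXint q (q+1)).const_mul 2) (hXXint q q)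
    have s3 : ∫ t, 2 * (X q t * X (q+1) t) ∂ν = 2 * ∫ t, X q t * X (q+1) t ∂ν :=
      integral_const_mul 2 _
    rw [e, s1, s2, s3, horth q (q+1) (Nat.le_succ q)]
    ring
  have hJmono : ∀ q, ∫ t, X q t * X q t ∂ν ≤ ∫ t, X (q+1) t * X (q+1) t ∂ν := by
    intro q
    have h0 : (0:ℝ) ≤ ∫ t, (X (q+1) t - X q t) * (X (q+1) t - X q t) ∂ν :=
      integral_nonneg fun t => mul_self_nonneg _
    rw [hDD q] at h0
    linarith
  have hMMstep : ∀ k, ∫ t, M (k+1) t * M (k+1) t ∂ν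
      = ∫ t, M k t * M k t ∂ν
        + (∫ t, X (2*k+1) t * X (2*k+1) t ∂ν - ∫ t, X (2*k) t * X (2*k) t ∂ν) := by
    intro k
    have iMX : ∀ r, Integrable (fun t => M k t * X r t) ν := fun r =>
      hprod_int _ _ (hMsm0 k) (hXsm0 r) _ _ (by positivity) (hMbν k) (hXbν r)
    have iD : Integrable (fun t => (X (2*k) t - X (2*k+1) t) * (X (2*k) t - X (2*k+1) t)) ν := by
      refine hprod_int _ _ ((hXsm0 (2*k)).sub (hXsm0 (2*k+1))) ((hXsm0 (2*k)).sub (hXsm0 (2*k+1)))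
        (1/c + 1/c) (1/c + 1/c) (by positivity) ?_ ?_ <;>
      · filter_upwards [hXbν (2*k), hXbν (2*k+1)] with t h1 h2
        calc |X (2*k) t - X (2*k+1) t| ≤ |X (2*k) t| + |X (2*k+1) t| := abs_sub _ _
          _ ≤ 1/c + 1/c := add_le_add h1 h2
    have e : (fun t => M (k+1) t * M (k+1) t)
        = fun t => (M k t * M k t
            + (2 * (M k t * X (2*k) t) - 2 * (M k t * X (2*k+1) t)))
            + (X (2*k) t - X (2*k+1) t) * (X (2*k) t - X (2*k+1) t) := by
      funext t; rw [hMsucc k t]; ring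
    have hA1 := lemA (2*k) (2*k) le_rfl (M k) ((2*k)/c) (by positivity) (hMsm k) (hMb k)
    have hA2 := lemA (2*k) (2*k+1) (Nat.le_succ _) (M k) ((2*k)/c) (by positivity) (hMsm k) (hMb k)
    have eD : ∫ t, (X (2*k) t - X (2*k+1) t) * (X (2*k) t - X (2*k+1) t) ∂ν
        = ∫ t, X (2*k+1) t * X (2*k+1) t ∂ν - ∫ t, X (2*k) t * X (2*k) t ∂ν := by
      rw [← hDD (2*k)]
      refine integral_congr_ae (ae_of_all _ fun t => ?_)
      ring
    have i2 : Integrable (fun t => 2 * (M k t * X (2*k) t) - 2 * (M k t * X (2*k+1) t)) ν :=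
      ((iMX (2*k)).const_mul 2).sub ((iMX (2*k+1)).const_mul 2)
    have s1 : ∫ t, ((M k t * M k t + (2 * (M k t * X (2*k) t) - 2 * (M k t * X (2*k+1) t)))
          + (X (2*k) t - X (2*k+1) t) * (X (2*k) t - X (2*k+1) t)) ∂ν
        = (∫ t, (M k t * M k t + (2 * (M k t * X (2*k) t) - 2 * (M k t * X (2*k+1) t))) ∂ν)
          + ∫ t, (X (2*k) t - X (2*k+1) t) * (X (2*k) t - X (2*k+1) t) ∂ν :=
      integral_add ((hMMint k k).add i2) iD
    have s2 : ∫ t, (M k t * M k t + (2 * (M k t * X (2*k) t) - 2 * (M k t * X (2*k+1) t))) ∂ν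
        = (∫ t, M k t * M k t ∂ν)
          + ∫ t, (2 * (M k t * X (2*k) t) - 2 * (M k t * X (2*k+1) t)) ∂ν :=
      integral_add (hMMint k k) i2
    have s3 : ∫ t, (2 * (M k t * X (2*k) t) - 2 * (M k t * X (2*k+1) t)) ∂ν
        = (∫ t, 2 * (M k t * X (2*k) t) ∂ν) - ∫ t, 2 * (M k t * X (2*k+1) t) ∂ν :=
      integral_sub ((iMX (2*k)).const_mul 2) ((iMX (2*k+1)).const_mul 2)
    have s4 : ∫ t, 2 * (M k t * X (2*k) t) ∂ν = 2 * ∫ t, M k t * X (2*k) t ∂ν :=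
      integral_const_mul 2 _
    have s5 : ∫ t, 2 * (M k t * X (2*k+1) t) ∂ν = 2 * ∫ t, M k t * X (2*k+1) t ∂ν :=
      integral_const_mul 2 _
    rw [e, s1, s2, s3, s4, s5, hA1, hA2, eD]
    ring
  have hJ0 : (0:ℝ) ≤ ∫ t, X 0 t * X 0 t ∂ν := integral_nonneg fun t => mul_self_nonneg _
  have hM0 : (fun t => M 0 t * M 0 t) = fun _ => (0:ℝ) := by
    funext t; rw [hM]; simp
  have hkey : ∀ n, ∫ t, M n t * M n t ∂ν + ∫ t, X 0 t * X 0 t ∂ν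
      ≤ ∫ t, X (2*n) t * X (2*n) t ∂ν := by
    intro n
    induction n with
    | zero =>
      rw [hM0, integral_zero]
      simp only [Nat.mul_zero]
      linarith
    | succ n ih =>
      have h2 : 2*(n+1) = (2*n+1)+1 := by ring
      rw [hMMstep n, h2]
      linarith [hJmono (2*n+1)]
  have hML2 : ∀ n, ∫ t, M n t * M n t ∂ν ≤ (μ univ).toReal * (1/c^2) := fun n => by
    linarith [hkey n, hJb (2*n), hJ0]
  ------------------------------------------------------------------
  -- Doob's maximal inequality
  ------------------------------------------------------------------
  set ε : ℝ≥0 := Real.toNNReal (lam*lam) with hε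
  have hεcoe : (ε : ℝ) = lam*lam := Real.coe_toNNReal _ (by positivity)
  have hε0 : (ε : ℝ≥0∞) ≠ 0 := by
    simp only [ne_eq, ENNReal.coe_eq_zero]
    exact (Real.toNNReal_pos.2 (by positivity)).ne'
  have hnonneg : (0:ℕ → Ω → ℝ) ≤ fun p t => M p t * M p t := fun p t => mul_self_nonneg _
  have hdoob : ∀ n, ν {t | (ε:ℝ) ≤ (Finset.range (n+1)).sup' Finset.nonempty_range_add_one
      fun k => M k t * M k t} ≤ ENNReal.ofReal ((μ univ).toReal * (1/c^2)) / ε := by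
    intro n
    have h := maximal_ineq hsub hnonneg (ε := ε) n
    have h2 : ENNReal.ofReal (∫ t in {t | (ε:ℝ) ≤ (Finset.range (n+1)).sup'
          Finset.nonempty_range_add_one fun k => M k t * M k t}, M n t * M n t ∂ν)
        ≤ ENNReal.ofReal ((μ univ).toReal * (1/c^2)) := by
      refine ENNReal.ofReal_le_ofReal ?_
      refine le_trans (setIntegral_le_integral (hMMint n n)
        (ae_of_all _ fun t => mul_self_nonneg _)) (hML2 n)
    rw [ENNReal.le_div_iff_mul_le (Or.inl hε0) (Or.inl ENNReal.coe_ne_top), mul_comm]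
    refine le_trans ?_ (le_trans h h2)
    exact le_rfl
  have hSn_mono : Monotone (fun n => {t | (ε:ℝ) ≤ (Finset.range (n+1)).sup'
      Finset.nonempty_range_add_one fun k => M k t * M k t}) := by
    intro n m hnm t ht
    have hss : Finset.range (n+1) ⊆ Finset.range (m+1) := Finset.range_subset_range.2 (by omega)
    exact le_trans ht (Finset.sup'_mono (f := fun k => M k t * M k t) hss
      Finset.nonempty_range_add_one)
  have hTsub : {t | ∃ p : ℕ, 1 ≤ p ∧ lam < |M p t|}
      ⊆ ⋃ n, {t | (ε:ℝ) ≤ (Finset.range (n+1)).sup'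
          Finset.nonempty_range_add_one fun k => M k t * M k t} := by
    rintro t ⟨p, _hp1, hp⟩
    refine Set.mem_iUnion.2 ⟨p, ?_⟩
    show (ε:ℝ) ≤ _
    refine Finset.le_sup'_of_le _ (Finset.self_mem_range_succ p) ?_
    rw [hεcoe]
    calc lam * lam ≤ |M p t| * |M p t| :=
          mul_le_mul hp.le hp.le hlam.le (abs_nonneg _)
      _ = M p t * M p t := abs_mul_abs_self _
  have hT_bound : ν {t | ∃ p : ℕ, 1 ≤ p ∧ lam < |M p t|}
      ≤ ENNReal.ofReal ((μ univ).toReal * (1/c^2)) / ε := by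
    refine le_trans (measure_mono hTsub) ?_
    rw [hSn_mono.measure_iUnion]
    exact iSup_le hdoob
  have hTmeas : MeasurableSet {t | ∃ p : ℕ, 1 ≤ p ∧ lam < |M p t|} := by
    have he : {t | ∃ p : ℕ, 1 ≤ p ∧ lam < |M p t|}
        = ⋃ p : ℕ, {t | 1 ≤ p ∧ lam < |M p t|} := by
      ext t; simp [Set.mem_iUnion]
    rw [he]
    refine MeasurableSet.iUnion fun p => ?_
    by_cases hp : 1 ≤ p
    · simp only [hp, true_and]
      exact measurableSet_lt measurable_const ((hMsm0 p).measurable.abs)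
    · have : {t : Ω | 1 ≤ p ∧ lam < |M p t|} = ∅ := by ext t; simp [hp]
      rw [this]; exact MeasurableSet.empty
  ------------------------------------------------------------------
  -- conclusion
  ------------------------------------------------------------------
  have hμT : μ {t | ∃ p : ℕ, 1 ≤ p ∧ lam < |M p t|}
      ≤ ENNReal.ofReal ((μ univ).toReal * (1/c^2)) / ε / ENNReal.ofReal c := by
    rw [ENNReal.le_div_iff_mul_le (Or.inl (ENNReal.ofReal_pos.2 hc).ne')
      (Or.inl ENNReal.ofReal_ne_top), mul_comm]
    exact le_trans (hν_ge _ hTmeas) hT_bound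
  refine le_trans hμT ?_
  have hεor : (ε : ℝ≥0∞) = ENNReal.ofReal (lam*lam) := rfl
  rw [hεor, ← ENNReal.ofReal_div_of_pos (by positivity : (0:ℝ) < lam*lam),
    ← ENNReal.ofReal_div_of_pos hc]
  refine ENNReal.ofReal_le_ofReal (le_of_eq ?_)
  have hμ0 : (0:ℝ) ≤ (μ univ).toReal := ENNReal.toReal_nonneg
  field_simp
  try exact Or.inl trivial


/-- With `γ`, `(Σ_p)`, `β_p`, `X_p` as in the martingale proposition,
for every `λ > 0` the Lebesgue measure of
`{t ∈ I : sup_{p ≥ 1} |∑_{q=0}^{2p−1} (−1)^q X_q(t)| > λ}` is at most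
`16 ℒ(I)/(λ² c³)`. -/
theorem stmt16 (v : E2) (hv : v ∈ sphere (0:E2) 1) (c : ℝ) (hc : 0 < c)
    (a b : ℝ) (γ γ' : ℝ → E2) (hγ : IsC1Curve a b γ γ')
    (hdir : ∀ t ∈ Set.Icc a b, c ≤ ⟪γ' t, v⟫)
    (ℱ : Filtration ℕ (Real.measurableSpace))
    (β : ℕ → ℝ → E2) (hβ : ∀ p, β p = (volume.restrict (Set.Icc a b))[γ'|ℱ p])
    (X : ℕ → ℝ → ℝ) (hX : ∀ p t, X p t = ⟪β p t, perp v⟫ / ⟪β p t, v⟫)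
    (lam : ℝ) (hlam : 0 < lam) :
    volume {t ∈ Set.Icc a b | ∃ p : ℕ, 1 ≤ p ∧
        lam < |∑ q ∈ Finset.range (2 * p), (-1 : ℝ) ^ q * X q t|}
      ≤ ENNReal.ofReal (16 * (b - a) / (lam ^ 2 * c ^ 3)) := by
  obtain ⟨hab, hγ'cont, _hderiv, hnorm⟩ := hγ
  set μR : Measure ℝ := volume.restrict (Set.Icc a b) with hμR
  haveI : IsFiniteMeasure μR :=
    ⟨by rw [hμR, Measure.restrict_apply_univ, Real.volume_Icc]; exact ENNReal.ofReal_lt_top⟩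
  have hv1 : ‖v‖ = 1 := by simpa using mem_sphere_zero_iff_norm.1 hv
  have hperp1 : ‖perp v‖ = 1 := by
    rw [EuclideanSpace.norm_eq] at hv1 ⊢
    rw [Fin.sum_univ_two] at hv1 ⊢
    simp only [perp, WithLp.equiv_symm_apply, PiLp.toLp_apply, Matrix.cons_val_zero, Matrix.cons_val_one,
      Matrix.head_cons, Real.norm_eq_abs, sq_abs, neg_sq] at hv1 ⊢
    rw [add_comm]
    exact hv1
  have hv1 : ‖v‖ = 1 := by simpa using mem_sphere_zero_iff_norm.1 hv
  -- integrability of γ'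
  have hγ'meas : AEStronglyMeasurable γ' μR := hγ'cont.aestronglyMeasurable measurableSet_Icc
  have hγ'int : Integrable γ' μR := by
    refine Integrable.mono' (integrable_const (1:ℝ)) hγ'meas ?_
    filter_upwards [ae_restrict_mem measurableSet_Icc] with t ht
    rw [hnorm t ht]
  -- the scalar processes
  have hu_int : Integrable (fun t => ⟪v, γ' t⟫) μR := hγ'int.const_inner v
  have hw_int : Integrable (fun t => ⟪perp v, γ' t⟫) μR := hγ'int.const_inner (perp v)
  have huc : ∀ᵐ t ∂μR, c ≤ ⟪v, γ' t⟫ := by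
    filter_upwards [ae_restrict_mem measurableSet_Icc] with t ht
    rw [real_inner_comm]
    exact hdir t ht
  have hu1 : ∀ᵐ t ∂μR, ⟪v, γ' t⟫ ≤ 1 := by
    filter_upwards [ae_restrict_mem measurableSet_Icc] with t ht
    calc ⟪v, γ' t⟫ ≤ ‖v‖ * ‖γ' t‖ := real_inner_le_norm _ _
      _ = 1 := by rw [hv1, hnorm t ht, one_mul]
  have hw1 : ∀ᵐ t ∂μR, |⟪perp v, γ' t⟫| ≤ 1 := by
    filter_upwards [ae_restrict_mem measurableSet_Icc] with t ht
    calc |⟪perp v, γ' t⟫| ≤ ‖perp v‖ * ‖γ' t‖ := abs_real_inner_le_norm _ _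
      _ = 1 := by rw [hperp1, hnorm t ht, one_mul]
  have hc1 : c ≤ 1 := by
    have ha : a ∈ Set.Icc a b := ⟨le_refl a, hab.le⟩
    calc c ≤ ⟪γ' a, v⟫ := hdir a ha
      _ ≤ ‖γ' a‖ * ‖v‖ := real_inner_le_norm _ _
      _ = 1 := by rw [hv1, hnorm a ha, one_mul]
  -- the conditional-expectation processes
  have hβsm : ∀ q, StronglyMeasurable[ℱ q] (β q) := by
    intro q; rw [hβ q]; exact stronglyMeasurable_condExp
  have hβint : ∀ q, Integrable (β q) μR := by
    intro q; rw [hβ q]; exact integrable_condExp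
  set U : ℕ → ℝ → ℝ := fun q t => ⟪v, β q t⟫ with hU
  set W : ℕ → ℝ → ℝ := fun q t => ⟪perp v, β q t⟫ with hW
  have hUsm : ∀ q, StronglyMeasurable[ℱ q] (U q) := fun q =>
    (innerSL ℝ v).continuous.comp_stronglyMeasurable (hβsm q)
  have hWsm : ∀ q, StronglyMeasurable[ℱ q] (W q) := fun q =>
    (innerSL ℝ (perp v)).continuous.comp_stronglyMeasurable (hβsm q)
  have hce : ∀ (z : E2) (q : ℕ), (fun t => ⟪z, β q t⟫) =ᵐ[μR] μR[(fun t => ⟪z, γ' t⟫)|ℱ q] := by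
    intro z q
    refine ae_eq_condExp_of_forall_setIntegral_eq (ℱ.le q) (hγ'int.const_inner z)
      (fun s _ _ => ((hβint q).const_inner z).integrableOn) (fun s hs _ => ?_)
      (((innerSL ℝ z).continuous.comp_stronglyMeasurable (hβsm q)).aestronglyMeasurable)
    have hβs : ∫ t in s, β q t ∂μR = ∫ t in s, γ' t ∂μR := by
      rw [hβ q]; exact setIntegral_condExp (ℱ.le q) hγ'int hs
    calc ∫ t in s, ⟪z, β q t⟫ ∂μR = ⟪z, ∫ t in s, β q t ∂μR⟫ :=
          integral_inner ((hβint q).integrableOn) z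
      _ = ⟪z, ∫ t in s, γ' t ∂μR⟫ := by rw [hβs]
      _ = ∫ t in s, ⟪z, γ' t⟫ ∂μR := (integral_inner (hγ'int.integrableOn) z).symm
  -- apply the abstract result
  have key := aux_main μR ℱ c hc hc1 (fun t => ⟪v, γ' t⟫) (fun t => ⟪perp v, γ' t⟫)
    hu_int hw_int huc hu1 hw1 U W hUsm hWsm (hce v) (hce (perp v)) lam hlam
  -- identify the sets
  have hWU : ∀ q t, W q t / U q t = X q t := by
    intro q t
    rw [hX, hU, hW]
    simp only
    rw [real_inner_comm (perp v), real_inner_comm v]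
  have hsum : ∀ (p : ℕ) (t : ℝ), (∑ q ∈ Finset.range (2*p), (-1:ℝ)^q * (W q t / U q t))
      = ∑ q ∈ Finset.range (2*p), (-1:ℝ)^q * X q t := fun p t =>
    Finset.sum_congr rfl fun q _ => by rw [hWU]
  have hset : {t ∈ Set.Icc a b | ∃ p : ℕ, 1 ≤ p ∧
        lam < |∑ q ∈ Finset.range (2 * p), (-1 : ℝ) ^ q * X q t|}
      = {t | ∃ p : ℕ, 1 ≤ p ∧
          lam < |∑ q ∈ Finset.range (2*p), (-1:ℝ)^q * (W q t / U q t)|} ∩ Set.Icc a b := by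
    ext t
    simp only [Set.mem_setOf_eq, Set.mem_inter_iff, hsum]
    exact and_comm
  rw [hset, ← Measure.restrict_apply' measurableSet_Icc]
  refine le_trans key ?_
  have hμuniv : (μR Set.univ).toReal = b - a := by
    rw [hμR, Measure.restrict_apply_univ, Real.volume_Icc, ENNReal.toReal_ofReal (by linarith)]
  rw [hμuniv]
  refine ENNReal.ofReal_le_ofReal ?_
  have h16 : b - a ≤ 16 * (b - a) := by linarith
  have hpos : (0:ℝ) ≤ (lam^2 * c^3)⁻¹ := by positivity
  calc (b - a) / (lam^2 * c^3) = (b - a) * (lam^2 * c^3)⁻¹ := by rw [div_eq_mul_inv]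
    _ ≤ (16 * (b - a)) * (lam^2 * c^3)⁻¹ := mul_le_mul_of_nonneg_right h16 hpos
    _ = 16 * (b - a) / (lam^2 * c^3) := by rw [div_eq_mul_inv]

end
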